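/- Let A be a nonassociative algebra containing an étale subalgebra K of dimension n in its nucleus, with dim A finite. Then any two of the following imply the third: (1) A is faithful as a K⊗K-module under (k⊗k')a = kak', (2) A is cyclic as a K⊗K-module, (3) dim_F A = (dim_F K)^2. -/

import Mathlib

open scoped TensorProduct

/-- The nucleus of a (possibly nonassociative) algebra. -/
def nucleus (A : Type*) [Mul A] : Set A :=
  {x | (∀ y z : A, x * y * z = x * (y * z)) ∧ (∀ y z : A, y * x * z = y * (x * z)) ∧
       (∀ y z : A, y * z * x = y * (z * x))}

/-- The action of `K ⊗ K` on `A` by left and right multiplication through `j : K →ₗ A`: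
`(k ⊗ k') • a = (j k) a (j k')`. -/
noncomputable def biAct {F K A : Type*} [Field F] [Ring K] [Algebra F K]
    [NonUnitalNonAssocRing A] [Module F A] [SMulCommClass F A A] [IsScalarTower F A A]
    (j : K →ₗ[F] A) : K ⊗[F] K →ₗ[F] A →ₗ[F] A :=
  TensorProduct.lift <| LinearMap.mk₂ F
    (fun k k' => (LinearMap.mulRight F (j k')).comp (LinearMap.mulLeft F (j k)))
    (fun k₁ k₂ k' => by ext a; simp [add_mul])
    (fun s k k' => by ext a; simp [smul_mul_assoc])
    (fun k k₁' k₂' => by ext a; simp [mul_add])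
    (fun s k k' => by ext a; simp [mul_smul_comm])

section AuxModule

variable {F R M : Type*} [Field F] [CommRing R] [Algebra F R] [AddCommGroup M]
  [Module F M] [Module R M] [IsScalarTower F R M]

/-- The map `x ↦ x • v` as an `F`-linear map. -/
noncomputable def spanMap (v : M) : R →ₗ[F] M :=
  { toFun := fun x => x • v
    map_add' := fun x y => add_smul x y v
    map_smul' := fun c x => smul_assoc c x v }

lemma aux_faithful_cyclic [FiniteDimensional F R] {v : M}
    (hf : ∀ x : R, (∀ a : M, x • a = 0) → x = 0)
    (hc : ∀ a : M, ∃ x : R, x • v = a) :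
    Module.finrank F M = Module.finrank F R := by
  have hinj : Function.Injective (spanMap (F := F) (R := R) v) := by
    rw [injective_iff_map_eq_zero]
    intro x hx
    refine hf x fun a => ?_
    obtain ⟨y, rfl⟩ := hc a
    calc x • (y • v) = y • (x • v) := by rw [← mul_smul, ← mul_smul, mul_comm]
    _ = 0 := by rw [show x • v = 0 from hx, smul_zero]
  have hsurj : Function.Surjective (spanMap (F := F) (R := R) v) := hc
  exact (LinearEquiv.ofBijective (spanMap (F := F) (R := R) v) ⟨hinj, hsurj⟩).symm.finrank_eq

lemma aux_cyclic_dim [FiniteDimensional F R] [FiniteDimensional F M] {v : M}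
    (hc : ∀ a : M, ∃ x : R, x • v = a)
    (hd : Module.finrank F M = Module.finrank F R) :
    ∀ x : R, (∀ a : M, x • a = 0) → x = 0 := by
  have hinj : Function.Injective (spanMap (F := F) (R := R) v) :=
    (LinearMap.injective_iff_surjective_of_finrank_eq_finrank hd.symm).mpr hc
  intro x hx
  have : spanMap (F := F) (R := R) v x = 0 := hx v
  simpa using hinj (by simpa using this)

lemma aux_faithful_dim [FiniteDimensional F R] [FiniteDimensional F M] [IsSemisimpleRing R]
    (hf : ∀ x : R, (∀ a : M, x • a = 0) → x = 0)
    (hd : Module.finrank F M = Module.finrank F R) :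
    ∃ v : M, ∀ a : M, ∃ x : R, x • v = a := by
  have hart : IsArtinian R R := isArtinian_of_tower F inferInstance
  set ann : M → Ideal R := fun v => LinearMap.ker (LinearMap.toSpanSingleton R M v) with hann
  obtain ⟨I, ⟨v, rfl⟩, hmin⟩ :=
    hart.wf.has_min {I : Ideal R | ∃ v : M, ann v = I} ⟨ann 0, 0, rfl⟩
  have hbot : ann v = ⊥ := by
    by_contra hne
    obtain ⟨e, he, hspan⟩ := IsSemisimpleRing.ideal_eq_span_idempotent (ann v)
    have he0 : e ≠ 0 := by
      rintro rfl
      rw [Set.singleton_zero, Ideal.span_zero] at hspan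
      exact hne hspan
    have heann : e ∈ ann v := hspan ▸ Ideal.subset_span rfl
    have hev : e • v = 0 := heann
    obtain ⟨w, hw⟩ : ∃ w : M, e • w ≠ 0 := by
      by_contra h
      push_neg at h
      exact he0 (hf e h)
    have hsub : ann (v + e • w) ≤ ann v := by
      intro x hx
      have hx0 : x • v + (x * e) • w = 0 := by
        have : x • (v + e • w) = 0 := hx
        rwa [smul_add, ← mul_smul] at this
      have hxe : (x * e) • w = 0 := by
        have h1 : e • (x • v) + e • ((x * e) • w) = 0 := by
          rw [← smul_add, hx0, smul_zero]
        have h2 : e • (x • v) = 0 := by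
          rw [← mul_smul, mul_comm, mul_smul, hev, smul_zero]
        have h3 : e • ((x * e) • w) = (x * e) • w := by
          rw [← mul_smul, mul_comm e (x * e), mul_assoc, he.eq]
        rw [h2, h3, zero_add] at h1
        exact h1
      have hxv : x • v = 0 := by rwa [hxe, add_zero] at hx0
      exact hxv
    have hne' : ann (v + e • w) ≠ ann v := by
      intro hEq
      have hmem : e ∈ ann (v + e • w) := hEq ▸ heann
      have : e • (v + e • w) = 0 := hmem
      rw [smul_add, hev, zero_add, ← mul_smul, he.eq] at this
      exact hw this
    exact hmin (ann (v + e • w)) ⟨_, rfl⟩ (lt_of_le_of_ne hsub hne')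
  refine ⟨v, fun a => ?_⟩
  have hinj : Function.Injective (spanMap (F := F) (R := R) v) := by
    rw [injective_iff_map_eq_zero]
    intro x hx
    have : x ∈ ann v := by simp only [hann, LinearMap.mem_ker, LinearMap.toSpanSingleton_apply]; exact hx
    rw [hbot] at this
    exact this
  have hr : Module.finrank F (LinearMap.range (spanMap (F := F) (R := R) v)) =
      Module.finrank F M := by
    rw [LinearMap.finrank_range_of_inj hinj, hd]
  have htop : LinearMap.range (spanMap (F := F) (R := R) v) = ⊤ :=
    Submodule.eq_top_of_finrank_eq hr
  have : a ∈ LinearMap.range (spanMap (F := F) (R := R) v) := htop ▸ Submodule.mem_top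
  obtain ⟨x, hx⟩ := this
  exact ⟨x, hx⟩

end AuxModule

section BiAct
variable {F K A : Type} [Field F] [CommRing K] [Algebra F K]
    [NonAssocRing A] [Module F A] [SMulCommClass F A A] [IsScalarTower F A A]
    (j : K →ₗ[F] A)

lemma biAct_tmul (k k' : K) (a : A) : biAct j (k ⊗ₜ[F] k') a = j k * a * j k' := by
  simp [biAct]

lemma biAct_one (hj_one : j 1 = 1) (a : A) : biAct j 1 a = a := by
  rw [Algebra.TensorProduct.one_def, biAct_tmul, hj_one, one_mul, mul_one]

lemma biAct_mul (hj_mul : ∀ k k' : K, j (k * k') = j k * j k')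
    (hj_nuc : ∀ k : K, j k ∈ nucleus A)
    (x y : K ⊗[F] K) (a : A) : biAct j (x * y) a = biAct j x (biAct j y a) := by
  induction x using TensorProduct.induction_on with
  | zero => simp
  | add x₁ x₂ h₁ h₂ => simp only [add_mul, map_add, LinearMap.add_apply, h₁, h₂]
  | tmul k k' =>
    induction y using TensorProduct.induction_on with
    | zero => simp
    | add y₁ y₂ h₁ h₂ => simp only [mul_add, map_add, LinearMap.add_apply, map_add, h₁, h₂]
    | tmul l l' =>
      rw [Algebra.TensorProduct.tmul_mul_tmul, biAct_tmul, biAct_tmul, biAct_tmul,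
        hj_mul, hj_mul]
      obtain ⟨hk1, _, _⟩ := hj_nuc k
      obtain ⟨_, hk'2, _⟩ := hj_nuc k'
      obtain ⟨_, hl'2, _⟩ := hj_nuc l'
      have e4 : j k' * j l' = j l' * j k' := by rw [← hj_mul, ← hj_mul, mul_comm]
      calc j k * j l * a * (j k' * j l')
          = j k * (j l * a) * (j k' * j l') := by rw [hk1 (j l) a]
        _ = j k * (j l * a) * (j l' * j k') := by rw [e4]
        _ = j k * (j l * a) * j l' * j k' := (hl'2 _ _).symm
        _ = j k * (j l * a * j l') * j k' := by rw [hk1 (j l * a) (j l')]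

/-- `biAct` as a ring homomorphism into the `F`-linear endomorphisms of `A`. -/
noncomputable def biActRingHom (hj_mul : ∀ k k' : K, j (k * k') = j k * j k')
    (hj_one : j 1 = 1) (hj_nuc : ∀ k : K, j k ∈ nucleus A) :
    (K ⊗[F] K) →+* Module.End F A where
  toFun := biAct j
  map_one' := LinearMap.ext fun a => biAct_one j hj_one a
  map_mul' x y := LinearMap.ext fun a => biAct_mul j hj_mul hj_nuc x y a
  map_zero' := map_zero _
  map_add' := map_add _

end BiAct

/-- Three-for-two: for a nonassociative algebra `A` containing an étale subalgebra `K`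
(of its nucleus), any two of (faithful over `K ⊗ K`), (cyclic over `K ⊗ K`),
(`dim A = (dim K)²`) imply the third. -/
theorem stmt_2 {F K A : Type} [Field F] [CommRing K] [Algebra F K] [Algebra.Etale F K]
    [FiniteDimensional F K]
    [NonAssocRing A] [Module F A] [SMulCommClass F A A] [IsScalarTower F A A]
    [FiniteDimensional F A]
    (j : K →ₗ[F] A) (hj_inj : Function.Injective j)
    (hj_mul : ∀ k k' : K, j (k * k') = j k * j k') (hj_one : j 1 = 1)
    (hj_nuc : ∀ k : K, j k ∈ nucleus A) :
    ((∀ x : K ⊗[F] K, (∀ a : A, biAct j x a = 0) → x = 0) →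
      (∃ v : A, ∀ a : A, ∃ x : K ⊗[F] K, biAct j x v = a) →
      Module.finrank F A = (Module.finrank F K) ^ 2) ∧
    ((∀ x : K ⊗[F] K, (∀ a : A, biAct j x a = 0) → x = 0) →
      Module.finrank F A = (Module.finrank F K) ^ 2 →
      (∃ v : A, ∀ a : A, ∃ x : K ⊗[F] K, biAct j x v = a)) ∧
    ((∃ v : A, ∀ a : A, ∃ x : K ⊗[F] K, biAct j x v = a) →
      Module.finrank F A = (Module.finrank F K) ^ 2 →
      (∀ x : K ⊗[F] K, (∀ a : A, biAct j x a = 0) → x = 0)) := by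
  -- the `K ⊗ K`-module structure on `A`
  letI instM : Module (K ⊗[F] K) A := Module.compHom A (biActRingHom j hj_mul hj_one hj_nuc)
  have hsmul : ∀ (x : K ⊗[F] K) (a : A), x • a = biAct j x a := fun _ _ => rfl
  haveI : IsScalarTower F (K ⊗[F] K) A := ⟨fun c x a => by
    rw [hsmul, hsmul, map_smul, LinearMap.smul_apply]⟩
  -- `K ⊗ K` is semisimple
  haveI : Algebra.FormallyUnramified F (K ⊗[F] K) :=
    Algebra.FormallyUnramified.comp F K (K ⊗[F] K)
  haveI : IsReduced (K ⊗[F] K) := Algebra.FormallyUnramified.isReduced_of_field F _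
  haveI : IsArtinianRing (K ⊗[F] K) := isArtinian_of_tower F inferInstance
  haveI : IsSemisimpleRing (K ⊗[F] K) := IsArtinianRing.isSemisimpleRing_of_isReduced _
  have hdim : Module.finrank F (K ⊗[F] K) = (Module.finrank F K) ^ 2 := by
    rw [Module.finrank_tensorProduct, sq]
  refine ⟨?_, ?_, ?_⟩
  · intro hf ⟨v, hc⟩
    rw [← hdim]
    exact aux_faithful_cyclic (F := F) (R := K ⊗[F] K) (v := v)
      (fun x hx => hf x fun a => by rw [← hsmul]; exact hx a)
      (fun a => by obtain ⟨x, hx⟩ := hc a; exact ⟨x, by rw [hsmul]; exact hx⟩)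
  · intro hf hd
    obtain ⟨v, hv⟩ := aux_faithful_dim (F := F) (R := K ⊗[F] K) (M := A)
      (fun x hx => hf x fun a => by rw [← hsmul]; exact hx a) (by rw [hd, hdim])
    exact ⟨v, fun a => by obtain ⟨x, hx⟩ := hv a; exact ⟨x, by rw [← hsmul]; exact hx⟩⟩
  · intro ⟨v, hc⟩ hd x hx
    exact aux_cyclic_dim (F := F) (R := K ⊗[F] K) (v := v)
      (fun a => by obtain ⟨y, hy⟩ := hc a; exact ⟨y, by rw [hsmul]; exact hy⟩)
      (by rw [hd, hdim]) x (fun a => by rw [hsmul]; exact hx a)
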